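/- Let c > 0, t > 0 and let k ≥ 1 be an integer. Then (i) ∫₀^{ct} u · ((2k+1)!/(2^{2k}(ct)^{2k+1}(k−1)!(k+1)!)) (c²t² − u²)^{k−1}(c²t² + u²) du = ((2k+1)!(k+2)/(2^{2k+1}((k+1)!)²)) · ct, and (ii) ∫₀^{ct} u · ((2k+2)!/((k+2)!(k−1)!(2ct)^{2k+1})) (c²t² − u²)^{k−1}(c²t² + 3u²) du = ((2k+1)!(k+4)/(2^{2k+1} k!(k+2)!)) · ct. Equivalently, (i) equals C(2k+1, k+1)·(ct/2^{2k+1})·(k+2)/(k+1) and (ii) equals C(2k+1, k+1)·(ct/2^{2k+1})·(k+4)/(k+2), where C(·,·) is the binomial coefficient. -/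

import Mathlib

open intervalIntegral

lemma key_int (a β : ℝ) (m : ℕ) :
    ∫ u in (0:ℝ)..a, u * (a^2 - u^2)^m * (a^2 + β * u^2) =
      (a^2)^(m+1) * (a^2 * ((m:ℝ) + β + 2) / (2*((m:ℝ)+1)*((m:ℝ)+2))) := by
  set A : ℝ := a^2*((m:ℝ)+β+2)/(2*((m:ℝ)+1)*((m:ℝ)+2)) with hA
  set B : ℝ := β/(2*((m:ℝ)+2)) with hB
  have hm1 : ((m:ℝ)+1) ≠ 0 := by positivity
  have hm2 : ((m:ℝ)+2) ≠ 0 := by positivity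
  have hderiv : ∀ x ∈ Set.uIcc (0:ℝ) a,
      HasDerivAt (fun u => -((a^2 - u^2)^(m+1) * (A + B*u^2)))
        (x * (a^2-x^2)^m * (a^2 + β*x^2)) x := by
    intro x _
    have h1 : HasDerivAt (fun u : ℝ => a^2 - u^2) (-(2*x)) x := by
      simpa using ((hasDerivAt_pow 2 x).const_sub (a^2))
    have h2 := h1.pow (m+1)
    have h3 : HasDerivAt (fun u : ℝ => A + B*u^2) (B*(2*x)) x := by
      simpa [mul_comm] using (((hasDerivAt_pow 2 x).const_mul B).const_add A)
    have h4 := (h2.mul h3).neg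
    refine h4.congr_deriv ?_
    simp only [Nat.add_sub_cancel, Pi.pow_apply]
    rw [hA, hB]
    field_simp
    push_cast
    ring
  have hint : IntervalIntegrable (fun x : ℝ => x * (a^2-x^2)^m * (a^2+β*x^2))
      MeasureTheory.volume 0 a := by
    apply Continuous.intervalIntegrable
    fun_prop
  rw [intervalIntegral.integral_eq_sub_of_hasDerivAt hderiv hint]
  simp [sub_self, hA]

theorem conditional_means_3d
    (c t : ℝ) (hc : 0 < c) (ht : 0 < t) (k : ℕ) (hk : 1 ≤ k) :
    ((∫ u in (0 : ℝ)..(c * t),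
        u * ((Nat.factorial (2 * k + 1) : ℝ) /
            (2 ^ (2 * k) * (c * t) ^ (2 * k + 1) *
              (Nat.factorial (k - 1) : ℝ) * (Nat.factorial (k + 1) : ℝ))) *
          (c ^ 2 * t ^ 2 - u ^ 2) ^ (k - 1) * (c ^ 2 * t ^ 2 + u ^ 2)) =
      (Nat.factorial (2 * k + 1) : ℝ) * ((k : ℝ) + 2) /
        (2 ^ (2 * k + 1) * ((Nat.factorial (k + 1) : ℝ)) ^ 2) * (c * t)) ∧
    ((∫ u in (0 : ℝ)..(c * t),
        u * ((Nat.factorial (2 * k + 2) : ℝ) /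
            ((Nat.factorial (k + 2) : ℝ) * (Nat.factorial (k - 1) : ℝ) *
              (2 * c * t) ^ (2 * k + 1))) *
          (c ^ 2 * t ^ 2 - u ^ 2) ^ (k - 1) * (c ^ 2 * t ^ 2 + 3 * u ^ 2)) =
      (Nat.factorial (2 * k + 1) : ℝ) * ((k : ℝ) + 4) /
        (2 ^ (2 * k + 1) * (Nat.factorial k : ℝ) * (Nat.factorial (k + 2) : ℝ)) *
        (c * t)) ∧
    ((Nat.factorial (2 * k + 1) : ℝ) * ((k : ℝ) + 2) /
        (2 ^ (2 * k + 1) * ((Nat.factorial (k + 1) : ℝ)) ^ 2) * (c * t) =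
      (Nat.choose (2 * k + 1) (k + 1) : ℝ) * (c * t / 2 ^ (2 * k + 1)) *
        (((k : ℝ) + 2) / ((k : ℝ) + 1))) ∧
    ((Nat.factorial (2 * k + 1) : ℝ) * ((k : ℝ) + 4) /
        (2 ^ (2 * k + 1) * (Nat.factorial k : ℝ) * (Nat.factorial (k + 2) : ℝ)) *
        (c * t) =
      (Nat.choose (2 * k + 1) (k + 1) : ℝ) * (c * t / 2 ^ (2 * k + 1)) *
        (((k : ℝ) + 4) / ((k : ℝ) + 2))) := by
  obtain ⟨m, rfl⟩ : ∃ m, k = m + 1 := ⟨k - 1, (Nat.succ_pred_eq_of_pos hk).symm⟩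
  have ha : (0:ℝ) < c * t := mul_pos hc ht
  have ha' : (c * t) ≠ 0 := ne_of_gt ha
  simp only [Nat.add_sub_cancel]
  -- factorial facts
  have Fm : (0:ℝ) < (Nat.factorial m : ℝ) := by exact_mod_cast (Nat.factorial_pos m)
  have F1 : (Nat.factorial (m+1) : ℝ) = ((m:ℝ)+1) * (Nat.factorial m : ℝ) := by
    rw [Nat.factorial_succ]; push_cast; ring
  have F2 : (Nat.factorial (m+1+1) : ℝ) = ((m:ℝ)+2) * ((m:ℝ)+1) * (Nat.factorial m : ℝ) := by
    rw [Nat.factorial_succ]; push_cast; rw [F1]; ring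
  have F3 : (Nat.factorial (m+1+2) : ℝ) = ((m:ℝ)+3) * ((m:ℝ)+2) * ((m:ℝ)+1) * (Nat.factorial m : ℝ) := by
    rw [show m+1+2 = (m+1+1)+1 from rfl, Nat.factorial_succ]; push_cast; rw [F2]; ring
  have F4 : (Nat.factorial (2*(m+1)+2) : ℝ) = (2*(m:ℝ)+4) * (Nat.factorial (2*(m+1)+1) : ℝ) := by
    rw [show 2*(m+1)+2 = (2*(m+1)+1)+1 from rfl, Nat.factorial_succ]; push_cast; ring
  have Fbig : (0:ℝ) < (Nat.factorial (2*(m+1)+1) : ℝ) := by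
    exact_mod_cast Nat.factorial_pos _
  have hm1 : ((m:ℝ)+1) ≠ 0 := by positivity
  have hm2 : ((m:ℝ)+2) ≠ 0 := by positivity
  have hm3 : ((m:ℝ)+3) ≠ 0 := by positivity
  have hch : ((2*(m+1)+1).choose (m+1+1) : ℝ) * (Nat.factorial (m+1+1) : ℝ) *
      (Nat.factorial (m+1) : ℝ) = (Nat.factorial (2*(m+1)+1) : ℝ) := by
    have h := Nat.choose_mul_factorial_mul_factorial (show m+1+1 ≤ 2*(m+1)+1 by omega)
    rw [show 2*(m+1)+1 - (m+1+1) = m+1 by omega] at h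
    exact_mod_cast congrArg (Nat.cast : ℕ → ℝ) h
  refine ⟨?_, ?_, ?_, ?_⟩
  · -- part (i)
    have e1 : (∫ u in (0 : ℝ)..(c * t),
        u * ((Nat.factorial (2 * (m+1) + 1) : ℝ) /
            (2 ^ (2 * (m+1)) * (c * t) ^ (2 * (m+1) + 1) *
              (Nat.factorial m : ℝ) * (Nat.factorial (m + 1 + 1) : ℝ))) *
          (c ^ 2 * t ^ 2 - u ^ 2) ^ m * (c ^ 2 * t ^ 2 + u ^ 2)) =
        ((Nat.factorial (2 * (m+1) + 1) : ℝ) /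
            (2 ^ (2 * (m+1)) * (c * t) ^ (2 * (m+1) + 1) *
              (Nat.factorial m : ℝ) * (Nat.factorial (m + 1 + 1) : ℝ))) *
        ∫ u in (0 : ℝ)..(c * t), u * ((c*t)^2 - u^2)^m * ((c*t)^2 + 1 * u^2) := by
      rw [← intervalIntegral.integral_const_mul]
      apply intervalIntegral.integral_congr
      intro u _
      ring
    rw [e1, key_int]
    rw [F2]
    have hpow : ((c*t)^2)^(m+1) = (c*t)^(2*(m+1)) := by rw [← pow_mul]
    rw [hpow]
    have hp : (0:ℝ) < (c*t)^(2*(m+1)) := by positivity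
    field_simp
    push_cast
    ring
  · -- part (ii)
    have e1 : (∫ u in (0 : ℝ)..(c * t),
        u * ((Nat.factorial (2 * (m+1) + 2) : ℝ) /
            ((Nat.factorial (m + 1 + 2) : ℝ) * (Nat.factorial m : ℝ) *
              (2 * c * t) ^ (2 * (m+1) + 1))) *
          (c ^ 2 * t ^ 2 - u ^ 2) ^ m * (c ^ 2 * t ^ 2 + 3 * u ^ 2)) =
        ((Nat.factorial (2 * (m+1) + 2) : ℝ) /
            ((Nat.factorial (m + 1 + 2) : ℝ) * (Nat.factorial m : ℝ) *
              (2 * c * t) ^ (2 * (m+1) + 1))) *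
        ∫ u in (0 : ℝ)..(c * t), u * ((c*t)^2 - u^2)^m * ((c*t)^2 + 3 * u^2) := by
      rw [← intervalIntegral.integral_const_mul]
      apply intervalIntegral.integral_congr
      intro u _
      ring
    rw [e1, key_int, F4, F3, F1]
    have hpow : ((c*t)^2)^(m+1) = (c*t)^(2*(m+1)) := by rw [← pow_mul]
    rw [hpow]
    have h2a : ((2:ℝ)*c*t) ^ (2*(m+1)+1) = 2^(2*(m+1)+1) * (c*t)^(2*(m+1)+1) := by
      rw [show (2:ℝ)*c*t = 2*(c*t) by ring, mul_pow]
    rw [h2a]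
    have hp : (0:ℝ) < (c*t)^(2*(m+1)) := by positivity
    field_simp
    push_cast
    ring
  · -- part (iii)
    rw [← hch, F2, F1]
    push_cast
    field_simp
    ring
  · -- part (iv)
    rw [← hch, F3, F2, F1]
    push_cast
    field_simp
    ring
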